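/- The element T_{[σ]} = (∏_{τ ∈ L_σ∩S} U_τ)(∏_{κ ∈ S∖L_σ} (Id − U_κ)) has diagonal entry 1 at μ if L_μ = L_σ and 0 otherwise. -/

import Mathlib

open scoped Classical

/-- Diagonal of a product of "triangular" matrices (w.r.t. a partial order)
is the product of the diagonals. -/
lemma tri_prod_diag {M : Type*} [Fintype M] [DecidableEq M]
    (r : M → M → Prop) (hrefl : ∀ a, r a a)
    (hanti : ∀ a b, r a b → r b a → a = b)
    (htrans : ∀ a b c, r a b → r b c → r a c)
    (l : List (Matrix M M ℤ))
    (hl : ∀ A ∈ l, ∀ a b, A a b ≠ 0 → r b a) :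
    (∀ a b, l.prod a b ≠ 0 → r b a) ∧
      ∀ μ, l.prod μ μ = (l.map (fun A => A μ μ)).prod := by
  induction l with
  | nil =>
    refine ⟨?_, ?_⟩
    · intro a b h
      simp only [List.prod_nil, Matrix.one_apply, ne_eq, ite_eq_right_iff,
        Classical.not_imp] at h
      rcases h with ⟨h, -⟩
      subst h
      exact hrefl a
    · intro μ; simp [Matrix.one_apply]
  | cons A t ih =>
    have hA : ∀ a b, A a b ≠ 0 → r b a := hl A List.mem_cons_self
    have ht : ∀ B ∈ t, ∀ a b, B a b ≠ 0 → r b a :=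
      fun B hB => hl B (List.mem_cons_of_mem _ hB)
    obtain ⟨ih1, ih2⟩ := ih ht
    constructor
    · intro a b h
      rw [List.prod_cons, Matrix.mul_apply] at h
      obtain ⟨c, -, hc⟩ := Finset.exists_ne_zero_of_sum_ne_zero h
      have h1 : A a c ≠ 0 := fun e => hc (by simp [e])
      have h2 : t.prod c b ≠ 0 := fun e => hc (by simp [e])
      exact htrans _ _ _ (ih1 c b h2) (hA a c h1)
    · intro μ
      rw [List.prod_cons, Matrix.mul_apply, List.map_cons, List.prod_cons, ← ih2]
      refine Finset.sum_eq_single μ ?_ (by simp)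
      intro c _ hc
      by_cases h1 : A μ c = 0
      · simp [h1]
      by_cases h2 : t.prod c μ = 0
      · simp [h2]
      exact absurd (hanti c μ (hA μ c h1) (ih1 c μ h2)) hc

/-- The element `T_{[σ]}`, the product (in any order) of the `U_τ` for
`τ ∈ L_σ ∩ S` and the `Id − U_κ` for `κ ∈ S ∖ L_σ`, has diagonal entry `1` at `μ`
if `L_μ = L_σ` and `0` otherwise. -/
theorem T_class_diag
    {M : Type*} [Monoid M] [Fintype M] [DecidableEq M]
    (hR : ∀ σ τ : M, {x : M | ∃ μ, x = σ * μ} = {x : M | ∃ μ, x = τ * μ} → σ = τ)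
    (S : Finset M) (hS : Submonoid.closure (S : Set M) = ⊤)
    (U : M → Matrix M M ℤ)
    (hU : ∀ τ, U τ = Matrix.of fun a b : M => if a * τ = b then (1 : ℤ) else 0)
    (σ : M) (l : List (Matrix M M ℤ))
    (hl : l.Perm (((S.filter (fun τ => σ * τ = σ)).toList.map U) ++
      ((S.filter (fun κ => ¬ σ * κ = σ)).toList.map (fun κ => 1 - U κ)))) :
    ∀ μ : M, l.prod μ μ =
      if {τ : M | μ * τ = μ} = {τ : M | σ * τ = σ} then 1 else 0 := by
  
  intro μ
  -- the R-order
  set r : M → M → Prop := fun a b => ∃ c, a = b * c with hr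
  have hrefl : ∀ a, r a a := fun a => ⟨1, by simp⟩
  have htrans : ∀ a b c, r a b → r b c → r a c := by
    rintro a b c ⟨x, rfl⟩ ⟨y, rfl⟩; exact ⟨y * x, mul_assoc _ _ _⟩
  have hanti : ∀ a b, r a b → r b a → a = b := by
    rintro a b ⟨x, hx⟩ ⟨y, hy⟩
    apply hR
    ext z
    constructor
    · rintro ⟨m, rfl⟩; exact ⟨x * m, by rw [hx, mul_assoc]⟩
    · rintro ⟨m, rfl⟩; exact ⟨y * m, by rw [hy, mul_assoc]⟩
  -- triangularity of every matrix in l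
  have hUent : ∀ τ a b, (U τ) a b = if a * τ = b then (1 : ℤ) else 0 := by
    intro τ a b; rw [hU]; rfl
  have htri : ∀ A ∈ l, ∀ a b, A a b ≠ 0 → r b a := by
    intro A hA a b hab
    have hA' := hl.mem_iff.mp hA
    rw [List.mem_append] at hA'
    rcases hA' with h | h
    · obtain ⟨τ, -, rfl⟩ := List.mem_map.mp h
      rw [hUent] at hab
      by_cases h : a * τ = b
      · exact ⟨τ, h.symm⟩
      · simp [h] at hab
    · obtain ⟨κ, -, rfl⟩ := List.mem_map.mp h
      have : ((1 : Matrix M M ℤ) - U κ) a b =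
          (if a = b then (1:ℤ) else 0) - (if a * κ = b then (1:ℤ) else 0) := by
        simp [Matrix.sub_apply, Matrix.one_apply, hUent]
      rw [this] at hab
      by_cases h1 : a = b
      · exact h1 ▸ hrefl a
      · by_cases h2 : a * κ = b
        · exact ⟨κ, h2.symm⟩
        · simp [h1, h2] at hab
  obtain ⟨-, hdiag⟩ := tri_prod_diag r hrefl hanti htrans l htri
  rw [hdiag μ, (hl.map (fun A => A μ μ)).prod_eq]
  rw [List.map_append, List.prod_append, List.map_map, List.map_map]
  simp only [Function.comp_def]
  -- key equivalence via closure
  have key : ({τ : M | μ * τ = μ} = {τ : M | σ * τ = σ}) ↔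
      ∀ s ∈ S, (σ * s = σ ↔ μ * s = μ) := by
    constructor
    · intro h s _
      have := Set.ext_iff.mp h s
      simpa using this.symm
    · intro h
      -- lemma: for ν with generator condition matching...
      have main : ∀ (a b : M), (∀ s ∈ S, (a * s = a ↔ b * s = b)) →
          ∀ τ : M, a * τ = a → b * τ = b := by
        intro a b hab τ
        have hτ : τ ∈ Submonoid.closure (S : Set M) := by rw [hS]; trivial
        induction hτ using Submonoid.closure_induction with
        | mem s hs => exact fun h' => (hab s hs).mp h'
        | one => intro; simp
        | mul x y hx hy ihx ihy =>
          intro hxy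
          rw [← mul_assoc] at hxy
          -- a * x = a by antisymmetry
          have hax : a * x = a := by
            apply hanti
            · exact ⟨x, rfl⟩
            · exact ⟨y, hxy.symm⟩
          have hay : a * y = a := by rw [hax] at hxy; exact hxy
          have hbx := ihx hax
          have hby := ihy hay
          rw [← mul_assoc, hbx, hby]
      ext τ
      simp only [Set.mem_setOf_eq]
      constructor
      · exact main μ σ (fun s hs => ((h s hs).symm)) τ
      · exact main σ μ h τ
  by_cases hc : {τ : M | μ * τ = μ} = {τ : M | σ * τ = σ}
  · rw [if_pos hc]
    have hall := key.mp hc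
    have p1 : ((S.filter (fun τ => σ * τ = σ)).toList.map (fun τ => (U τ) μ μ)).prod = 1 := by
      apply List.prod_eq_one
      intro x hx
      obtain ⟨τ, hτ, rfl⟩ := List.mem_map.mp hx
      rw [Finset.mem_toList, Finset.mem_filter] at hτ
      rw [hUent, if_pos ((hall τ hτ.1).mp hτ.2)]
    have p2 : ((S.filter (fun κ => ¬ σ * κ = σ)).toList.map (fun κ => ((1 : Matrix M M ℤ) - U κ) μ μ)).prod = 1 := by
      apply List.prod_eq_one
      intro x hx
      obtain ⟨κ, hκ, rfl⟩ := List.mem_map.mp hx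
      rw [Finset.mem_toList, Finset.mem_filter] at hκ
      have hμκ : ¬ μ * κ = μ := fun h' => hκ.2 ((hall κ hκ.1).mpr h')
      simp [Matrix.sub_apply, Matrix.one_apply, hUent, hμκ]
    rw [p1, p2]; ring
  · rw [if_neg hc]
    have : ∃ s ∈ S, ¬ (σ * s = σ ↔ μ * s = μ) := by
      by_contra h'
      push_neg at h'
      exact hc (key.mpr h')
    obtain ⟨s, hs, hns⟩ := this
    rw [iff_iff_implies_and_implies, not_and_or] at hns
    rcases hns with hns | hns
    · push_neg at hns
      obtain ⟨h1, h2⟩ := hns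
      have : (0 : ℤ) ∈ (S.filter (fun τ => σ * τ = σ)).toList.map (fun τ => (U τ) μ μ) := by
        rw [List.mem_map]
        exact ⟨s, by rw [Finset.mem_toList, Finset.mem_filter]; exact ⟨hs, h1⟩,
          by rw [hUent, if_neg h2]⟩
      rw [List.prod_eq_zero this, zero_mul]
    · push_neg at hns
      obtain ⟨h1, h2⟩ := hns
      have : (0 : ℤ) ∈ (S.filter (fun κ => ¬ σ * κ = σ)).toList.map
          (fun κ => ((1 : Matrix M M ℤ) - U κ) μ μ) := by
        rw [List.mem_map]
        refine ⟨s, by rw [Finset.mem_toList, Finset.mem_filter]; exact ⟨hs, h2⟩, ?_⟩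
        simp [Matrix.sub_apply, Matrix.one_apply, hUent, h1]
      rw [List.prod_eq_zero this, mul_zero]
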